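/- Let p be a probability distribution on n-qubit Paulis such that p(R) = 0 for all R of weight ≥ 4, and suppose every weight-3 marginal is small: μ(R_B) < ε for all Paulis R_B with w(R_B) = |B| = 3. Then for distinct qubits i ≠ j and P, Q ∈ {X,Y,Z}: μ(P_iQ_j) − 3(n−2)ε < p(P_iQ_j) ≤ μ(P_iQ_j). -/

import Mathlib

open Matrix Finset

/-- n-qubit Paulis (mod phase), identified with `(Z₂)^{2n}` via `P = Xᵃ Zᵇ`. -/
abbrev Pauli (n : ℕ) := (Fin n → ZMod 2) × (Fin n → ZMod 2)

/-- The standard symplectic form on `(Z₂)^{2n}`. -/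
def symp {n : ℕ} (Q P : Pauli n) : ZMod 2 :=
  ∑ i, (Q.1 i * P.2 i + Q.2 i * P.1 i)

/-- The commutation character: `χ_Q(P) = 1` if `Q` and `P` commute, `-1` otherwise. -/
def chi {n : ℕ} (Q P : Pauli n) : ℤ := (-1) ^ (symp Q P).val

/-- The Pauli operator `Xᵃ Zᵇ` as a `2ⁿ × 2ⁿ` matrix (indexed by bit strings). -/
def PauliOp {n : ℕ} (P : Pauli n) :
    Matrix (Fin n → ZMod 2) (Fin n → ZMod 2) ℂ :=
  fun s t => if s = t + P.1 then (-1 : ℂ) ^ (∑ i, P.2 i * t i).val else 0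

/-- `P` acts as the identity outside the qubit set `A`. -/
def supportedIn {n : ℕ} (A : Finset (Fin n)) (P : Pauli n) : Prop :=
  ∀ i ∉ A, P.1 i = 0 ∧ P.2 i = 0

instance {n : ℕ} (A : Finset (Fin n)) : DecidablePred (supportedIn A) := fun _ => by
  unfold supportedIn; infer_instance

/-- The marginal distribution: `μ(P_A) = Σ_{Q supported in Aᶜ} p(P_A · Q)`. -/
noncomputable def marginal {n : ℕ} (p : Pauli n → ℝ) (A : Finset (Fin n))
    (P : Pauli n) : ℝ :=
  ∑ Q ∈ Finset.univ.filter (fun Q => supportedIn Aᶜ Q), p (P + Q)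

/-- The weight of a Pauli: the number of qubits on which it acts nontrivially. -/
def weight {n : ℕ} (P : Pauli n) : ℕ :=
  (Finset.univ.filter (fun i => P.1 i ≠ 0 ∨ P.2 i ≠ 0)).card

/-- The single-qubit Pauli `v ∈ {I,X,Y,Z} ≃ Z₂ × Z₂` placed at qubit `i`. -/
def single {n : ℕ} (i : Fin n) (v : ZMod 2 × ZMod 2) : Pauli n :=
  (Pi.single i v.1, Pi.single i v.2)

/-- The support of a Pauli as a set of qubits. -/
def psupp {n : ℕ} (P : Pauli n) : Finset (Fin n) :=
  Finset.univ.filter (fun i => P.1 i ≠ 0 ∨ P.2 i ≠ 0)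


section Helpers

variable {n : ℕ}

lemma mem_psupp {P : Pauli n} {m : Fin n} :
    m ∈ psupp P ↔ P.1 m ≠ 0 ∨ P.2 m ≠ 0 := by simp [psupp]

lemma not_mem_psupp {P : Pauli n} {m : Fin n} :
    m ∉ psupp P ↔ P.1 m = 0 ∧ P.2 m = 0 := by
  rw [mem_psupp, not_or, not_ne_iff, not_ne_iff]

lemma weight_def (P : Pauli n) : weight P = (psupp P).card := rfl

lemma weight_eq_zero {Q : Pauli n} : weight Q = 0 ↔ Q = 0 := by
  rw [weight_def, Finset.card_eq_zero]
  constructor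
  · intro h
    have hz : ∀ m, Q.1 m = 0 ∧ Q.2 m = 0 := fun m =>
      not_mem_psupp.mp (by simp [h])
    exact Prod.ext_iff.mpr ⟨funext fun m => (hz m).1, funext fun m => (hz m).2⟩
  · rintro rfl
    rw [Finset.eq_empty_iff_forall_notMem]
    intro m
    simp [mem_psupp]

lemma supportedIn_compl_iff {A : Finset (Fin n)} {Q : Pauli n} :
    supportedIn Aᶜ Q ↔ Disjoint A (psupp Q) := by
  rw [Finset.disjoint_left]
  constructor
  · intro h m hm hm'
    have := h m (by simpa using hm)
    rcases mem_psupp.mp hm' with h1 | h1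
    · exact h1 this.1
    · exact h1 this.2
  · intro h m hm
    exact not_mem_psupp.mp (h (by simpa using hm))

lemma psupp_add_eq {P Q : Pauli n} (h : Disjoint (psupp P) (psupp Q)) :
    psupp (P + Q) = psupp P ∪ psupp Q := by
  ext m
  rw [Finset.mem_union]
  by_cases hq : m ∈ psupp Q
  · have hp : m ∉ psupp P := fun hp => (Finset.disjoint_left.mp h hp) hq
    obtain ⟨h1, h2⟩ := not_mem_psupp.mp hp
    simp only [mem_psupp, Prod.fst_add, Prod.snd_add, Pi.add_apply, h1, h2, zero_add]
    rw [← mem_psupp]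
    tauto
  · obtain ⟨h1, h2⟩ := not_mem_psupp.mp hq
    simp only [mem_psupp, Prod.fst_add, Prod.snd_add, Pi.add_apply, h1, h2, add_zero]
    rw [← mem_psupp]
    tauto

lemma psupp_single (i : Fin n) {v : ZMod 2 × ZMod 2} (hv : v ≠ 0) :
    psupp (single i v) = {i} := by
  ext m
  rw [mem_psupp, Finset.mem_singleton]
  rcases eq_or_ne m i with rfl | hm
  · simp only [_root_.single, Pi.single_eq_same, iff_true]
    by_contra h
    push_neg at h
    exact hv (Prod.ext_iff.mpr ⟨h.1, h.2⟩)
  · simp [_root_.single, Pi.single_eq_of_ne hm, hm]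

lemma weight_single (i : Fin n) {v : ZMod 2 × ZMod 2} (hv : v ≠ 0) :
    weight (single i v) = 1 := by
  rw [weight_def, psupp_single i hv, Finset.card_singleton]

lemma eq_single_of_psupp {Q : Pauli n} {k : Fin n} (h : psupp Q = {k}) :
    Q = single k (Q.1 k, Q.2 k) := by
  have hz : ∀ m, m ≠ k → Q.1 m = 0 ∧ Q.2 m = 0 := fun m hm =>
    not_mem_psupp.mp (by simp [h, hm])
  refine Prod.ext_iff.mpr ⟨funext fun m => ?_, funext fun m => ?_⟩ <;>
    rcases eq_or_ne m k with rfl | hm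
  · simp [_root_.single]
  · simp [_root_.single, Pi.single_eq_of_ne hm, (hz m hm).1]
  · simp [_root_.single]
  · simp [_root_.single, Pi.single_eq_of_ne hm, (hz m hm).2]

lemma zero_supportedIn (A : Finset (Fin n)) : supportedIn A (0 : Pauli n) :=
  fun _ _ => ⟨rfl, rfl⟩

lemma p_le_marginal (p : Pauli n → ℝ) (hp0 : ∀ R, 0 ≤ p R)
    (A : Finset (Fin n)) (R : Pauli n) : p R ≤ marginal p A R := by
  have h0 : (0 : Pauli n) ∈ Finset.univ.filter (fun Q => supportedIn Aᶜ Q) := by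
    simp [zero_supportedIn]
  have := Finset.single_le_sum (f := fun Q => p (R + Q)) (fun Q _ => hp0 _) h0
  simpa [marginal] using this

end Helpers

/-- if `p` vanishes on weight ≥ 4 and every weight-3 marginal is
below `ε`, then for distinct `i ≠ j` and `P, Q ∈ {X,Y,Z}`:
`μ(P_iQ_j) − 3(n−2)ε < p(P_iQ_j) ≤ μ(P_iQ_j)`. -/
theorem weight_three_marginal_bound {n : ℕ} (p : Pauli n → ℝ) (ε : ℝ)
    (hp0 : ∀ R, 0 ≤ p R) (hp1 : ∑ R, p R = 1)
    (h4 : ∀ R : Pauli n, 4 ≤ weight R → p R = 0)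
    (h3 : ∀ R : Pauli n, weight R = 3 → marginal p (psupp R) R < ε)
    (hn : 3 ≤ n) (i j : Fin n) (hij : i ≠ j)
    (v w : ZMod 2 × ZMod 2) (hv : v ≠ 0) (hw : w ≠ 0) :
    marginal p {i, j} (single i v + single j w) - 3 * ((n : ℝ) - 2) * ε
        < p (single i v + single j w) ∧
    p (single i v + single j w) ≤ marginal p {i, j} (single i v + single j w) := by
  classical
  set S := single i v + single j w with hSdef
  have hsuppS : psupp S = {i, j} := by
    have hd : Disjoint (psupp (single i v)) (psupp (single j w)) := by
      rw [psupp_single i hv, psupp_single j hw]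
      simpa using hij
    rw [hSdef, psupp_add_eq hd, psupp_single i hv, psupp_single j hw]
    rfl
  have hcardij : ({i, j} : Finset (Fin n)).card = 2 := by
    rw [Finset.card_insert_of_notMem (by simpa using hij), Finset.card_singleton]
  have hwS : weight S = 2 := by rw [weight_def, hsuppS, hcardij]
  -- key: weight of S + Q for Q supported outside {i,j}
  have key : ∀ Q : Pauli n, supportedIn ({i, j} : Finset (Fin n))ᶜ Q →
      weight (S + Q) = 2 + weight Q := by
    intro Q hQ
    have hd : Disjoint (psupp S) (psupp Q) := by
      rw [hsuppS]; exact supportedIn_compl_iff.mp hQ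
    rw [weight_def, psupp_add_eq hd, Finset.card_union_of_disjoint hd,
      ← weight_def, ← weight_def, hwS]
  set F := Finset.univ.filter
    (fun Q : Pauli n => supportedIn ({i, j} : Finset (Fin n))ᶜ Q) with hF
  have hμ : marginal p {i, j} S = ∑ Q ∈ F, p (S + Q) := rfl
  -- restrict to weight ≤ 1
  have hμ1 : marginal p {i, j} S = ∑ Q ∈ F.filter (fun Q => weight Q ≤ 1), p (S + Q) := by
    rw [hμ]
    refine (Finset.sum_filter_of_ne ?_).symm
    intro Q hQ hne
    have hQ' := (Finset.mem_filter.mp hQ).2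
    by_contra hgt
    push_neg at hgt
    exact hne (h4 _ (by rw [key Q hQ']; omega))
  set T : Finset (Pauli n) := F.filter (fun Q => weight Q = 1) with hT
  have h0F : (0 : Pauli n) ∈ F := by
    rw [hF, Finset.mem_filter]
    exact ⟨Finset.mem_univ _, zero_supportedIn _⟩
  have hsplit : F.filter (fun Q => weight Q ≤ 1) = insert 0 T := by
    ext Q
    simp only [Finset.mem_insert, Finset.mem_filter, hT]
    constructor
    · rintro ⟨hFQ, hw1⟩
      rcases Nat.le_one_iff_eq_zero_or_eq_one.mp hw1 with h0 | h1
      · exact Or.inl (weight_eq_zero.mp h0)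
      · exact Or.inr ⟨hFQ, h1⟩
    · rintro (rfl | ⟨hFQ, h1⟩)
      · exact ⟨h0F, by simp [weight_eq_zero.mpr rfl]⟩
      · exact ⟨hFQ, h1.le⟩
  have h0T : (0 : Pauli n) ∉ T := by
    rw [hT, Finset.mem_filter]
    rintro ⟨-, h1⟩
    rw [weight_eq_zero.mpr rfl] at h1
    exact zero_ne_one h1
  have hμ2 : marginal p {i, j} S = p S + ∑ Q ∈ T, p (S + Q) := by
    rw [hμ1, hsplit, Finset.sum_insert h0T, add_zero]
  -- upper bound
  have hupper : p S ≤ marginal p {i, j} S := by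
    rw [hμ2]
    have : (0 : ℝ) ≤ ∑ Q ∈ T, p (S + Q) := Finset.sum_nonneg fun Q _ => hp0 _
    linarith
  -- reindex T by pairs (k, u)
  set K : Finset (Fin n) := ({i, j} : Finset (Fin n))ᶜ with hK
  set U : Finset (ZMod 2 × ZMod 2) := Finset.univ.filter (fun u => u ≠ 0) with hU
  have hmemT : ∀ x : Fin n × (ZMod 2 × ZMod 2), x ∈ K ×ˢ U → _root_.single x.1 x.2 ∈ T := by
    rintro ⟨k, u⟩ hx
    rw [Finset.mem_product] at hx
    have hk : k ∈ K := hx.1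
    have hu : u ≠ 0 := (Finset.mem_filter.mp hx.2).2
    rw [hT, Finset.mem_filter, hF, Finset.mem_filter]
    refine ⟨⟨Finset.mem_univ _, ?_⟩, weight_single k hu⟩
    rw [supportedIn_compl_iff, psupp_single k hu, Finset.disjoint_singleton_right]
    rw [hK, Finset.mem_compl] at hk
    exact hk
  have hbij : ∑ Q ∈ T, p (S + Q) = ∑ x ∈ K ×ˢ U, p (S + _root_.single x.1 x.2) := by
    refine (Finset.sum_bij (fun x _ => _root_.single x.1 x.2) hmemT ?_ ?_ fun x hx => rfl).symm
    · rintro ⟨k, u⟩ hx ⟨k', u'⟩ hx' heq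
      rw [Finset.mem_product] at hx hx'
      have hu : u ≠ 0 := (Finset.mem_filter.mp hx.2).2
      have hu' : u' ≠ 0 := (Finset.mem_filter.mp hx'.2).2
      have hkk : k = k' := by
        have := congrArg psupp heq
        rw [psupp_single k hu, psupp_single k' hu'] at this
        exact Finset.singleton_injective this
      subst hkk
      have h1 := congrFun (congrArg Prod.fst heq) k
      have h2 := congrFun (congrArg Prod.snd heq) k
      simp only [_root_.single, Pi.single_eq_same] at h1 h2
      exact Prod.ext_iff.mpr ⟨rfl, Prod.ext_iff.mpr ⟨h1, h2⟩⟩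
    · intro Q hQ
      rw [hT, Finset.mem_filter] at hQ
      obtain ⟨hFQ, hw1⟩ := hQ
      obtain ⟨k, hk⟩ := Finset.card_eq_one.mp (by rw [← weight_def]; exact hw1)
      have hQs := (Finset.mem_filter.mp hFQ).2
      have hkK : k ∈ K := by
        rw [hK, Finset.mem_compl]
        intro hkij
        exact (Finset.disjoint_left.mp (supportedIn_compl_iff.mp hQs) hkij)
          (by rw [hk]; exact Finset.mem_singleton_self k)
      have hkmem : k ∈ psupp Q := by rw [hk]; exact Finset.mem_singleton_self k
      have huz : (Q.1 k, Q.2 k) ≠ 0 := by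
        intro h
        rw [Prod.ext_iff] at h
        exact (not_mem_psupp.mpr ⟨h.1, h.2⟩) hkmem
      refine ⟨(k, (Q.1 k, Q.2 k)), ?_, (eq_single_of_psupp hk).symm⟩
      rw [Finset.mem_product]
      exact ⟨hkK, by rw [hU, Finset.mem_filter]; exact ⟨Finset.mem_univ _, huz⟩⟩
  -- each term is < ε
  have hterm : ∀ x : Fin n × (ZMod 2 × ZMod 2), x ∈ K ×ˢ U →
      p (S + _root_.single x.1 x.2) < ε := by
    rintro ⟨k, u⟩ hx
    rw [Finset.mem_product] at hx
    have hu : u ≠ 0 := (Finset.mem_filter.mp hx.2).2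
    have hsupp : supportedIn ({i, j} : Finset (Fin n))ᶜ (single k u) := by
      rw [supportedIn_compl_iff, psupp_single k hu, Finset.disjoint_singleton_right]
      have := hx.1
      rw [hK, Finset.mem_compl] at this
      exact this
    have hw3 : weight (S + _root_.single k u) = 3 := by
      rw [key _ hsupp, weight_single k hu]
    calc p (S + _root_.single k u) ≤ marginal p (psupp (S + _root_.single k u)) (S + _root_.single k u) :=
          p_le_marginal p hp0 _ _
      _ < ε := h3 _ hw3
  -- cardinalities
  have hcardK : K.card = n - 2 := by
    rw [hK, Finset.card_compl, hcardij, Fintype.card_fin]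
  have hcardU : U.card = 3 := by rw [hU]; decide
  have hcard : (K ×ˢ U).card = (n - 2) * 3 := by
    rw [Finset.card_product, hcardK, hcardU]
  have hne : (K ×ˢ U).Nonempty := by
    refine Finset.Nonempty.product ?_ ⟨(1, 0), by rw [hU]; decide⟩
    rw [← Finset.card_pos, hcardK]
    omega
  have hsumlt : ∑ x ∈ K ×ˢ U, p (S + _root_.single x.1 x.2) < 3 * ((n : ℝ) - 2) * ε := by
    have h1 : ∑ x ∈ K ×ˢ U, p (S + _root_.single x.1 x.2) < ∑ _x ∈ K ×ˢ U, ε :=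
      Finset.sum_lt_sum_of_nonempty hne hterm
    have h2 : ∑ _x ∈ K ×ˢ U, ε = ((n - 2 : ℕ) * 3 : ℕ) * ε := by
      rw [Finset.sum_const, hcard, nsmul_eq_mul]
    rw [h2] at h1
    have h3' : (((n - 2 : ℕ) * 3 : ℕ) : ℝ) = 3 * ((n : ℝ) - 2) := by
      push_cast [Nat.cast_sub (by omega : 2 ≤ n)]
      ring
    rw [h3'] at h1
    exact h1
  refine ⟨?_, hupper⟩
  have hfin : ∑ Q ∈ T, p (S + Q) < 3 * ((n : ℝ) - 2) * ε := by
    rw [hbij]; exact hsumlt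
  rw [hμ2]
  linarith
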